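/- For any matching π of size n and any p with 1 ≤ p ≤ n - 1, the multiplicities defined by Rule A and Rule B coincide: m_p^{(A)}(π) = m_p^{(B)}(π). -/

import Mathlib

/-- A noncrossing perfect matching of `{1,…,2n}`, given as a finset of pairs `(a,b)`
with `a < b`. -/
def IsMatching (n : ℕ) (M : Finset (ℕ × ℕ)) : Prop :=
  (∀ q ∈ M, 1 ≤ q.1 ∧ q.1 < q.2 ∧ q.2 ≤ 2 * n) ∧
  (∀ x, 1 ≤ x → x ≤ 2 * n → ∃! q, q ∈ M ∧ (q.1 = x ∨ q.2 = x)) ∧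
  (∀ q ∈ M, ∀ r ∈ M, ¬(q.1 < r.1 ∧ r.1 < q.2 ∧ q.2 < r.2))

/-- Rule A multiplicity: half the number of arches separating `{1,…,p} ∪ {2n+1-p,…,2n}`
from the middle part. -/
def mA (n : ℕ) (M : Finset (ℕ × ℕ)) (p : ℕ) : ℕ :=
  ((M.filter fun q => q.1 ≤ p ∧ p < q.2 ∧ q.2 < 2 * n + 1 - p).card +
   (M.filter fun q => p < q.1 ∧ q.1 < 2 * n + 1 - p ∧ 2 * n + 1 - p ≤ q.2).card) / 2

/-- The Young diagram `Y(π)` of the matching `M`, with 1-indexed boxes `(x,y)`: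
`(x,y) ∈ Y(π)` iff the number of left endpoints of arches among `{1,…,n-x+y}` is at
most `n - x`. -/
def cellsM (n : ℕ) (M : Finset (ℕ × ℕ)) : Finset (ℕ × ℕ) :=
  ((Finset.Icc 1 n) ×ˢ (Finset.Icc 1 n)).filter fun u =>
    ((M.image Prod.fst).filter fun t => t ≤ n - u.1 + u.2).card ≤ n - u.1

/-- The diagonal depth of a box: the number of `t` with `(x+t, y+t)` a box of `Y(π)`.
The successive rims of `Y(π)` are the sets of boxes of fixed depth. -/
def depthM (n : ℕ) (M : Finset (ℕ × ℕ)) (u : ℕ × ℕ) : ℕ :=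
  ((Finset.range (n + 1)).filter fun t => (u.1 + t, u.2 + t) ∈ cellsM n M).card

/-- The `ℓ`-th rim of `Y(π)`. -/
def rimM (n : ℕ) (M : Finset (ℕ × ℕ)) (ℓ : ℕ) : Finset (ℕ × ℕ) :=
  (cellsM n M).filter fun u => depthM n M u = ℓ

/-- Label (`n+1-x-y`) of the bottom-left box of the `ℓ`-th rim. -/
def iLab (n : ℕ) (M : Finset (ℕ × ℕ)) (ℓ : ℕ) : ℕ :=
  ((rimM n M ℓ).filter fun u => u.1 = (rimM n M ℓ).sup Prod.fst).sup
    fun u => n + 1 - u.1 - u.2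

/-- Label (`n+1-x-y`) of the top-right box of the `ℓ`-th rim. -/
def jLab (n : ℕ) (M : Finset (ℕ × ℕ)) (ℓ : ℕ) : ℕ :=
  ((rimM n M ℓ).filter fun u => u.2 = (rimM n M ℓ).sup Prod.snd).sup
    fun u => n + 1 - u.1 - u.2

/-- Minimal label on the `ℓ`-th rim (equals `n + 1` by convention on an empty rim,
which then contributes nothing below). -/
def kLab (n : ℕ) (M : Finset (ℕ × ℕ)) (ℓ : ℕ) : ℕ :=
  n + 1 - (rimM n M ℓ).sup fun u => u.1 + u.2

/-- Rule B multiplicity: multiplicity of `p` in the union over the rims of the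
multisets `{k} ∪ {i,…,k+1} ∪ {j,…,k+1}`. -/
def mB (n : ℕ) (M : Finset (ℕ × ℕ)) (p : ℕ) : ℕ :=
  ∑ ℓ ∈ Finset.Icc 1 n,
    ((if kLab n M ℓ ≤ p ∧ p ≤ iLab n M ℓ then 1 else 0) +
     (if kLab n M ℓ + 1 ≤ p ∧ p ≤ jLab n M ℓ then 1 else 0))

namespace RuleAB

def Oc (M : Finset (ℕ × ℕ)) (m : ℕ) : ℕ := ((M.image Prod.fst).filter fun t => t ≤ m).card
def Cc (M : Finset (ℕ × ℕ)) (m : ℕ) : ℕ := (M.filter fun q => q.2 ≤ m).card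
def Cr (M : Finset (ℕ × ℕ)) (m : ℕ) : ℕ := (M.filter fun q => q.1 ≤ m ∧ m < q.2).card

variable {n : ℕ} {M : Finset (ℕ × ℕ)}

lemma bnd (hM : IsMatching n M) {q : ℕ × ℕ} (hq : q ∈ M) :
    1 ≤ q.1 ∧ q.1 < q.2 ∧ q.2 ≤ 2 * n := hM.1 q hq

lemma injOn_fst (hM : IsMatching n M) : Set.InjOn Prod.fst (M : Set (ℕ × ℕ)) := by
  intro q hq r hr h
  obtain ⟨b1, b2, b3⟩ := bnd hM hq
  obtain ⟨w, hw, hu⟩ := hM.2.1 q.1 b1 (le_trans (le_of_lt b2) b3)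
  have h1 : q = w := hu q ⟨hq, Or.inl rfl⟩
  have h2 : r = w := hu r ⟨hr, Or.inl h.symm⟩
  rw [h1, h2]

lemma Oc_eq (hM : IsMatching n M) (m : ℕ) :
    Oc M m = (M.filter fun q => q.1 ≤ m).card := by
  unfold Oc
  rw [Finset.filter_image]
  exact Finset.card_image_of_injOn ((injOn_fst hM).mono (by
    intro x hx; exact Finset.mem_filter.mp hx |>.1))

lemma card_at (hM : IsMatching n M) {x : ℕ} (h1 : 1 ≤ x) (h2 : x ≤ 2 * n) :
    (M.filter fun q => q.1 = x).card + (M.filter fun q => q.2 = x).card = 1 := by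
  obtain ⟨w, hw, hu⟩ := hM.2.1 x h1 h2
  have hwlt : w.1 < w.2 := (bnd hM hw.1).2.1
  rcases hw.2 with h | h
  · have e1 : (M.filter fun q => q.1 = x) = {w} := by
      ext q
      simp only [Finset.mem_filter, Finset.mem_singleton]
      constructor
      · rintro ⟨hq, hqx⟩; exact hu q ⟨hq, Or.inl hqx⟩
      · rintro rfl; exact ⟨hw.1, h⟩
    have e2 : (M.filter fun q => q.2 = x) = ∅ := by
      ext q
      simp only [Finset.mem_filter, Finset.notMem_empty, iff_false, not_and]
      intro hq hqx
      have : q = w := hu q ⟨hq, Or.inr hqx⟩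
      have : w.2 = x := by rw [← this]; exact hqx
      omega
    rw [e1, e2]; simp
  · have e1 : (M.filter fun q => q.1 = x) = ∅ := by
      ext q
      simp only [Finset.mem_filter, Finset.notMem_empty, iff_false, not_and]
      intro hq hqx
      have : q = w := hu q ⟨hq, Or.inl hqx⟩
      have : w.1 = x := by rw [← this]; exact hqx
      omega
    have e2 : (M.filter fun q => q.2 = x) = {w} := by
      ext q
      simp only [Finset.mem_filter, Finset.mem_singleton]
      constructor
      · rintro ⟨hq, hqx⟩; exact hu q ⟨hq, Or.inr hqx⟩
      · rintro rfl; exact ⟨hw.1, h⟩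
    rw [e1, e2]; simp

lemma Oc_succ (hM : IsMatching n M) (m : ℕ) :
    Oc M (m + 1) = Oc M m + (M.filter fun q => q.1 = m + 1).card := by
  rw [Oc_eq hM, Oc_eq hM]
  rw [← Finset.card_union_of_disjoint (by
    simp only [Finset.disjoint_filter]
    intro q _ hq hq'; omega)]
  congr 1
  rw [← Finset.filter_or]
  apply Finset.filter_congr
  intro q _; omega

lemma Cc_succ (m : ℕ) :
    Cc M (m + 1) = Cc M m + (M.filter fun q => q.2 = m + 1).card := by
  unfold Cc
  rw [← Finset.card_union_of_disjoint (by
    simp only [Finset.disjoint_filter]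
    intro q _ hq hq'; omega)]
  congr 1
  rw [← Finset.filter_or]
  apply Finset.filter_congr
  intro q _; omega

lemma Oc_mono {m m' : ℕ} (h : m ≤ m') : Oc M m ≤ Oc M m' := by
  apply Finset.card_le_card
  intro t ht
  simp only [Finset.mem_filter] at ht ⊢
  exact ⟨ht.1, ht.2.trans h⟩

lemma Cc_mono {m m' : ℕ} (h : m ≤ m') : Cc M m ≤ Cc M m' := by
  apply Finset.card_le_card
  intro t ht
  simp only [Finset.mem_filter] at ht ⊢
  exact ⟨ht.1, ht.2.trans h⟩

lemma Oc_zero (hM : IsMatching n M) : Oc M 0 = 0 := by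
  rw [Oc_eq hM, Finset.card_eq_zero, Finset.filter_eq_empty_iff]
  intro q hq; have := bnd hM hq; omega

lemma Cc_zero (hM : IsMatching n M) : Cc M 0 = 0 := by
  rw [Cc, Finset.card_eq_zero, Finset.filter_eq_empty_iff]
  intro q hq; have := bnd hM hq; omega

lemma OC_sum (hM : IsMatching n M) : ∀ m, m ≤ 2 * n → Oc M m + Cc M m = m := by
  intro m
  induction m with
  | zero => intro _; rw [Oc_zero hM, Cc_zero hM]
  | succ k ih =>
    intro hk
    rw [Oc_succ hM, Cc_succ]
    have := card_at hM (x := k + 1) (by omega) hk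
    have h2 := ih (by omega)
    omega

lemma Oc_step (hM : IsMatching n M) (m : ℕ) : Oc M (m + 1) ≤ Oc M m + 1 := by
  rw [Oc_succ hM]
  have : (M.filter fun q => q.1 = m + 1).card ≤ 1 := by
    apply Finset.card_le_one.mpr
    intro a ha b hb
    simp only [Finset.mem_filter] at ha hb
    exact injOn_fst hM ha.1 hb.1 (by rw [ha.2, hb.2])
  omega

lemma Cc_step (hM : IsMatching n M) (m : ℕ) : Cc M (m + 1) ≤ Cc M m + 1 := by
  rw [Cc_succ]
  have : (M.filter fun q => q.2 = m + 1).card ≤ 1 := by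
    apply Finset.card_le_one.mpr
    intro a ha b hb
    simp only [Finset.mem_filter] at ha hb
    obtain ⟨w, hw, hu⟩ := hM.2.1 (m+1) (by omega) (by
      have := bnd hM ha.1; omega)
    have h1 : a = w := hu a ⟨ha.1, Or.inr ha.2⟩
    have h2 : b = w := hu b ⟨hb.1, Or.inr hb.2⟩
    rw [h1, h2]
  omega

lemma card_M (hM : IsMatching n M) : M.card = n := by
  have h := OC_sum hM (2 * n) (le_refl _)
  have hO : Oc M (2 * n) = M.card := by
    rw [Oc_eq hM]
    congr 1
    apply Finset.filter_true_of_mem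
    intro q hq; have := bnd hM hq; omega
  have hC : Cc M (2 * n) = M.card := by
    unfold Cc
    congr 1
    apply Finset.filter_true_of_mem
    intro q hq; have := bnd hM hq; omega
  omega

lemma Oc_le_n (hM : IsMatching n M) (m : ℕ) : Oc M m ≤ n := by
  calc Oc M m ≤ (M.image Prod.fst).card := Finset.card_filter_le _ _
  _ ≤ M.card := Finset.card_image_le
  _ = n := card_M hM

lemma Cc_le_n (hM : IsMatching n M) (m : ℕ) : Cc M m ≤ n := by
  calc Cc M m ≤ M.card := Finset.card_filter_le _ _
  _ = n := card_M hM

lemma Oc_big (hM : IsMatching n M) {m : ℕ} (h : 2 * n ≤ m) : Oc M m = n := by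
  have h1 : Oc M (2*n) ≤ Oc M m := Oc_mono h
  have h2 := Oc_le_n hM m
  have h3 := OC_sum hM (2*n) (le_refl _)
  have h4 := Cc_le_n hM (2*n)
  omega

lemma Cc_le_Oc (hM : IsMatching n M) (m : ℕ) : Cc M m ≤ Oc M m := by
  rw [Oc_eq hM]
  apply Finset.card_le_card
  intro q hq
  simp only [Finset.mem_filter] at hq ⊢
  have := bnd hM hq.1
  exact ⟨hq.1, by omega⟩

lemma Cr_add (hM : IsMatching n M) (m : ℕ) : Cr M m + Cc M m = Oc M m := by
  rw [Oc_eq hM, Cr, Cc]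
  rw [← Finset.card_union_of_disjoint (by
    simp only [Finset.disjoint_filter]
    intro q _ hq hq'; omega)]
  congr 1
  rw [← Finset.filter_or]
  apply Finset.filter_congr
  intro q hq
  have := bnd hM hq
  omega


lemma ivt_first (hM : IsMatching n M) {a b L : ℕ} (hab : a ≤ b) (hb2n : b ≤ 2*n)
    (ha : Cc M a + L < Oc M a) (hb : Oc M b ≤ Cc M b + L) :
    ∃ m, a < m ∧ m ≤ b ∧ Oc M m = Cc M m + L := by
  classical
  have hex : ∃ m, a ≤ m ∧ Oc M m ≤ Cc M m + L := ⟨b, hab, hb⟩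
  obtain ⟨ham0, hm0⟩ := Nat.find_spec hex
  set m0 := Nat.find hex with hm0def
  have hm0b : m0 ≤ b := Nat.find_le ⟨hab, hb⟩
  have ha' : a < m0 := by
    rcases Nat.lt_or_ge a m0 with h | h
    · exact h
    · exfalso; have : m0 = a := le_antisymm h ham0; rw [this] at hm0; omega
  have hmin : ¬ (a ≤ m0 - 1 ∧ Oc M (m0-1) ≤ Cc M (m0-1) + L) := Nat.find_min hex (by omega)
  have h1 : Cc M (m0-1) + L < Oc M (m0-1) := by
    rcases Nat.lt_or_ge (Cc M (m0-1) + L) (Oc M (m0-1)) with h | h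
    · exact h
    · exact absurd ⟨by omega, h⟩ hmin
  have hs1 := OC_sum hM (m0-1) (by omega)
  have hs2 := OC_sum hM m0 (by omega)
  have hs3 : Oc M (m0-1) ≤ Oc M m0 := Oc_mono (by omega)
  have hs4 : Oc M m0 ≤ Oc M (m0-1) + 1 := by
    have := Oc_step hM (m0-1)
    have : m0 - 1 + 1 = m0 := by omega
    rw [← this]; exact Oc_step hM (m0-1)
  exact ⟨m0, ha', hm0b, by omega⟩

lemma ivt_last (hM : IsMatching n M) {L : ℕ} : ∀ (d a : ℕ), a + d ≤ 2*n →
    Oc M a ≤ Cc M a + L → Cc M (a+d) + L < Oc M (a+d) →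
    ∃ m, a ≤ m ∧ m < a + d ∧ Oc M m = Cc M m + L := by
  intro d
  induction d with
  | zero => intro a _ h1 h2; simp only [Nat.add_zero] at h2; omega
  | succ k ih =>
    intro a h2n h1 h2
    rcases Nat.lt_or_ge (Cc M (a+1) + L) (Oc M (a+1)) with h | h
    · refine ⟨a, le_refl _, by omega, ?_⟩
      have hs1 := OC_sum hM a (by omega)
      have hs2 := OC_sum hM (a+1) (by omega)
      have hs3 : Oc M a ≤ Oc M (a+1) := Oc_mono (by omega)
      have hs4 := Oc_step hM a
      omega
    · have := ih (a+1) (by omega) h (by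
        have : a + 1 + k = a + (k+1) := by omega
        rw [this]; exact h2)
      obtain ⟨m, hm1, hm2, hm3⟩ := this
      exact ⟨m, by omega, by omega, hm3⟩

lemma eq_of_shared (hM : IsMatching n M) {q r : ℕ × ℕ} (hq : q ∈ M) (hr : r ∈ M)
    {x : ℕ} (h1 : 1 ≤ x) (h2 : x ≤ 2*n) (hqx : q.1 = x ∨ q.2 = x) (hrx : r.1 = x ∨ r.2 = x) :
    q = r := by
  obtain ⟨w, _, hu⟩ := hM.2.1 x h1 h2
  rw [hu q ⟨hq, hqx⟩, hu r ⟨hr, hrx⟩]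

lemma exists_mstar (hM : IsMatching n M) {p : ℕ} (hp1 : 1 ≤ p) (hpn : p + 1 ≤ n) :
    ∃ m, p ≤ m ∧ m ≤ 2*n-p ∧
      Oc M m ≤ Cc M m + (M.filter fun q => q.1 ≤ p ∧ 2*n+1-p ≤ q.2).card := by
  classical
  obtain ⟨mst, hmem, hmin⟩ := Finset.exists_min_image (Finset.Icc p (2*n-p)) (fun m => Cr M m)
    ⟨p, Finset.mem_Icc.mpr ⟨le_refl _, by omega⟩⟩
  rw [Finset.mem_Icc] at hmem
  refine ⟨mst, hmem.1, hmem.2, ?_⟩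
  have key : (M.filter fun q => q.1 ≤ mst ∧ mst < q.2) ⊆
      (M.filter fun q => q.1 ≤ p ∧ 2*n+1-p ≤ q.2) := by
    intro q hq
    rw [Finset.mem_filter] at hq ⊢
    obtain ⟨hqM, hq1, hq2⟩ := hq
    have hqb := bnd hM hqM
    refine ⟨hqM, ?_, ?_⟩
    · -- q.1 ≤ p
      by_contra hc
      push_neg at hc   -- p < q.1
      -- crossing (q.1 - 1) ⊂ crossing mst
      have hsub : (M.filter fun r => r.1 ≤ q.1 - 1 ∧ q.1 - 1 < r.2) ⊆
          (M.filter fun r => r.1 ≤ mst ∧ mst < r.2) := by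
        intro r hr
        rw [Finset.mem_filter] at hr ⊢
        obtain ⟨hrM, hr1, hr2⟩ := hr
        have hrb := bnd hM hrM
        refine ⟨hrM, by omega, ?_⟩
        by_contra hc2
        push_neg at hc2  -- r.2 ≤ mst
        have hne : r.2 ≠ q.1 := by
          intro he
          have heq := eq_of_shared hM hrM hqM (x := q.1) (by omega) (by omega)
            (Or.inr he) (Or.inl rfl)
          rw [heq] at hr1
          omega
        have hnc := hM.2.2 r hrM q hqM
        omega
      have hne2 : q ∉ (M.filter fun r => r.1 ≤ q.1 - 1 ∧ q.1 - 1 < r.2) := by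
        rw [Finset.mem_filter]; push_neg; intro _ h; omega
      have hqin : q ∈ (M.filter fun r => r.1 ≤ mst ∧ mst < r.2) := by
        rw [Finset.mem_filter]; exact ⟨hqM, hq1, hq2⟩
      have hlt : Cr M (q.1 - 1) < Cr M mst :=
        Finset.card_lt_card (Finset.ssubset_iff_of_subset hsub |>.mpr ⟨q, hqin, hne2⟩)
      have := hmin (q.1 - 1) (Finset.mem_Icc.mpr ⟨by omega, by omega⟩)
      omega
    · -- 2n+1-p ≤ q.2
      by_contra hc
      push_neg at hc   -- q.2 < 2n+1-p i.e. q.2 ≤ 2n-p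
      have hsub : (M.filter fun r => r.1 ≤ q.2 ∧ q.2 < r.2) ⊆
          (M.filter fun r => r.1 ≤ mst ∧ mst < r.2) := by
        intro r hr
        rw [Finset.mem_filter] at hr ⊢
        obtain ⟨hrM, hr1, hr2⟩ := hr
        have hrb := bnd hM hrM
        refine ⟨hrM, ?_, by omega⟩
        by_contra hc2
        push_neg at hc2  -- mst < r.1
        have hne : r.1 ≠ q.2 := by
          intro he
          have heq := eq_of_shared hM hrM hqM (x := q.2) (by omega) (by omega)
            (Or.inl he) (Or.inr rfl)
          rw [heq] at hc2
          omega
        have hnc := hM.2.2 q hqM r hrM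
        omega
      have hne2 : q ∉ (M.filter fun r => r.1 ≤ q.2 ∧ q.2 < r.2) := by
        rw [Finset.mem_filter]; push_neg; intro _ h; omega
      have hqin : q ∈ (M.filter fun r => r.1 ≤ mst ∧ mst < r.2) := by
        rw [Finset.mem_filter]; exact ⟨hqM, hq1, hq2⟩
      have hlt : Cr M q.2 < Cr M mst :=
        Finset.card_lt_card (Finset.ssubset_iff_of_subset hsub |>.mpr ⟨q, hqin, hne2⟩)
      have := hmin q.2 (Finset.mem_Icc.mpr ⟨by omega, by omega⟩)
      omega
  have h1 : Cr M mst ≤ (M.filter fun q => q.1 ≤ p ∧ 2*n+1-p ≤ q.2).card :=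
    Finset.card_le_card key
  have h2 := Cr_add hM mst
  omega


lemma Cc_big (hM : IsMatching n M) {m : ℕ} (h : 2 * n ≤ m) : Cc M m = n := by
  have h1 : Cc M (2*n) ≤ Cc M m := Cc_mono h
  have h2 := Cc_le_n hM m
  have h3 := OC_sum hM (2*n) (le_refl _)
  have h4 := Oc_le_n hM (2*n)
  omega

lemma mem_cells {u : ℕ × ℕ} :
    u ∈ cellsM n M ↔ (1 ≤ u.1 ∧ u.1 ≤ n) ∧ (1 ≤ u.2 ∧ u.2 ≤ n) ∧
      Oc M (n - u.1 + u.2) ≤ n - u.1 := by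
  rw [cellsM, Finset.mem_filter, Finset.mem_product, Finset.mem_Icc, Finset.mem_Icc]
  unfold Oc
  tauto

lemma cells_closed {a b : ℕ} (ha : 1 ≤ a) (hb : 1 ≤ b) (h : (a+1, b+1) ∈ cellsM n M) :
    (a, b) ∈ cellsM n M := by
  rw [mem_cells] at h ⊢
  simp only at h ⊢
  obtain ⟨⟨_, h1⟩, ⟨_, h2⟩, h3⟩ := h
  have he : n - (a+1) + (b+1) = n - a + b := by omega
  rw [he] at h3
  refine ⟨⟨ha, by omega⟩, ⟨hb, by omega⟩, by omega⟩

lemma initial_seg {T : Finset ℕ} (hcl : ∀ t, t + 1 ∈ T → t ∈ T) :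
    T = Finset.range T.card := by
  classical
  rcases T.eq_empty_or_nonempty with h | h
  · simp [h]
  · have hdown : ∀ d t, t ∈ T → t - d ∈ T := by
      intro d
      induction d with
      | zero => intro t ht; simpa using ht
      | succ k ih =>
        intro t ht
        have h1 := ih t ht
        rcases Nat.eq_zero_or_pos (t - k) with h0 | h0
        · have he : t - (k+1) = 0 := by omega
          rw [he]; rw [h0] at h1; exact h1
        · have he : t - (k+1) + 1 = t - k := by omega
          exact hcl _ (by rw [he]; exact h1)
    have hT : T = Finset.range (T.max' h + 1) := by
      apply Finset.Subset.antisymm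
      · intro t ht
        rw [Finset.mem_range]
        exact Nat.lt_succ_of_le (Finset.le_max' T t ht)
      · intro t ht
        rw [Finset.mem_range] at ht
        have h2 := hdown (T.max' h - t) (T.max' h) (T.max'_mem h)
        have he : T.max' h - (T.max' h - t) = t := by omega
        rwa [he] at h2
    have hc : T.card = T.max' h + 1 := by
      conv_lhs => rw [hT]
      exact Finset.card_range _
    rw [hc]
    exact hT

lemma depth_filter_eq {u : ℕ × ℕ} (hx : 1 ≤ u.1) (hy : 1 ≤ u.2) :
    ((Finset.range (n + 1)).filter fun t => (u.1 + t, u.2 + t) ∈ cellsM n M)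
      = Finset.range (depthM n M u) := by
  unfold depthM
  apply initial_seg
  intro t ht
  rw [Finset.mem_filter, Finset.mem_range] at ht ⊢
  refine ⟨by omega, ?_⟩
  have h1 : u.1 + (t+1) = (u.1 + t) + 1 := by omega
  have h2 : u.2 + (t+1) = (u.2 + t) + 1 := by omega
  rw [h1, h2] at ht
  exact cells_closed (by omega) (by omega) ht.2

lemma mem_rim (hM : IsMatching n M) {ℓ : ℕ} (hl1 : 1 ≤ ℓ) (hln : ℓ ≤ n) {u : ℕ × ℕ} :
    u ∈ rimM n M ℓ ↔ ∃ m, ℓ ≤ Cc M m ∧ Oc M m + ℓ ≤ n ∧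
      u.1 + ℓ + Oc M m = n + 1 ∧ u.2 + ℓ = Cc M m + 1 := by
  constructor
  · intro hu
    rw [rimM, Finset.mem_filter] at hu
    obtain ⟨hcell, hd⟩ := hu
    rw [mem_cells] at hcell
    obtain ⟨⟨hx1, hx2⟩, ⟨hy1, hy2⟩, _⟩ := hcell
    have hTeq := depth_filter_eq (n := n) (M := M) (u := u) hx1 hy1
    rw [hd] at hTeq
    set m := n - u.1 + u.2 with hm
    have hm2n : m ≤ 2 * n := by omega
    -- ℓ-1 ∈ T
    have hA : (u.1 + (ℓ-1), u.2 + (ℓ-1)) ∈ cellsM n M := by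
      have : ℓ - 1 ∈ Finset.range ℓ := Finset.mem_range.mpr (by omega)
      rw [← hTeq, Finset.mem_filter] at this
      exact this.2
    have hB : (u.1 + ℓ, u.2 + ℓ) ∉ cellsM n M := by
      intro hc
      have : ℓ ∈ Finset.range ℓ := by
        rw [← hTeq, Finset.mem_filter, Finset.mem_range]
        exact ⟨by omega, hc⟩
      simp at this
    rw [mem_cells] at hA
    simp only at hA
    obtain ⟨⟨_, hA1⟩, ⟨_, hA2⟩, hA3⟩ := hA
    have heA : n - (u.1 + (ℓ-1)) + (u.2 + (ℓ-1)) = m := by omega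
    rw [heA] at hA3
    -- upper bound : Oc m + u.1 + ℓ ≤ n + 1
    have hup : Oc M m + u.1 + ℓ ≤ n + 1 := by omega
    -- lower bound
    have hlow : n + 1 ≤ Oc M m + u.1 + ℓ := by
      rw [mem_cells] at hB
      simp only [not_and_or] at hB
      rcases hB with hB | hB | hB
      · omega
      · -- u.2 + ℓ > n
        have hy : u.2 + ℓ = n + 1 := by omega
        have hs := OC_sum hM m hm2n
        have hc := Cc_le_n hM m
        omega
      · push_neg at hB
        rcases Nat.lt_or_ge n (u.1 + ℓ) with h | h
        · omega
        · have heB : n - (u.1 + ℓ) + (u.2 + ℓ) = m := by omega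
          rw [heB] at hB
          omega
    have hOm : Oc M m + u.1 + ℓ = n + 1 := le_antisymm hup hlow
    have hs := OC_sum hM m hm2n
    exact ⟨m, by omega, by omega, by omega, by omega⟩
  · rintro ⟨m, h1, h2, h3, h4⟩
    have hm2n : m < 2 * n := by
      by_contra hc
      push_neg at hc
      have := Oc_big hM hc
      omega
    have hs := OC_sum hM m (by omega)
    have hCO := Cc_le_Oc hM m
    have hx1 : 1 ≤ u.1 := by omega
    have hy1 : 1 ≤ u.2 := by omega
    rw [rimM, Finset.mem_filter]
    have hucell : u ∈ cellsM n M := by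
      rw [mem_cells]
      have harg : n - u.1 + u.2 = m := by omega
      rw [harg]
      refine ⟨⟨hx1, by omega⟩, ⟨hy1, by omega⟩, by omega⟩
    refine ⟨hucell, ?_⟩
    have hTeq := depth_filter_eq (n := n) (M := M) (u := u) hx1 hy1
    have hmemT : ∀ t, t ∈ Finset.range (depthM n M u) ↔ (t ≤ n ∧ (u.1 + t, u.2 + t) ∈ cellsM n M) := by
      intro t
      rw [← hTeq, Finset.mem_filter, Finset.mem_range]
      constructor
      · rintro ⟨a, b⟩; refine ⟨?_, b⟩; omega
      · rintro ⟨a, b⟩; refine ⟨?_, b⟩; omega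
    have hiff : ∀ t, (t ≤ n ∧ (u.1 + t, u.2 + t) ∈ cellsM n M) ↔ t < ℓ := by
      intro t
      constructor
      · rintro ⟨htn, hc⟩
        rw [mem_cells] at hc
        simp only at hc
        obtain ⟨⟨_, hc1⟩, _, hc3⟩ := hc
        have heC : n - (u.1 + t) + (u.2 + t) = m := by omega
        rw [heC] at hc3
        omega
      · intro ht
        refine ⟨by omega, ?_⟩
        rw [mem_cells]
        simp only
        have heC : n - (u.1 + t) + (u.2 + t) = m := by omega
        rw [heC]
        refine ⟨⟨by omega, by omega⟩, ⟨by omega, by omega⟩, by omega⟩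
    have : Finset.range (depthM n M u) = Finset.range ℓ := by
      ext t
      rw [hmemT t, hiff t, Finset.mem_range]
    have h2 := congrArg Finset.card this
    simpa using h2
  

lemma iLab_eq (hM : IsMatching n M) {ℓ : ℕ} (hl1 : 1 ≤ ℓ) (hln : ℓ ≤ n) {m0 : ℕ}
    (h0 : ℓ ≤ Cc M m0) (h0' : Oc M m0 + ℓ ≤ n) :
    ∃ uu, Cc M uu = ℓ ∧ Oc M uu + Cc M uu = uu ∧ Oc M uu + ℓ ≤ n ∧
      iLab n M ℓ = ℓ - 1 + Oc M uu ∧ (∀ m', ℓ ≤ Cc M m' → uu ≤ m') := by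
  classical
  have hex : ∃ m, ℓ ≤ Cc M m := ⟨m0, h0⟩
  set uu := Nat.find hex with huu
  have hCu : ℓ ≤ Cc M uu := Nat.find_spec hex
  have hmin : ∀ m', m' < uu → ¬ (ℓ ≤ Cc M m') := fun m' h => Nat.find_min hex h
  have hminle : ∀ m', ℓ ≤ Cc M m' → uu ≤ m' := by
    intro m' h
    by_contra hc
    exact hmin m' (by omega) h
  have hum0 : uu ≤ m0 := hminle m0 h0
  have hOu : Oc M uu + ℓ ≤ n := by
    have := Oc_mono (M := M) hum0
    omega
  have hu1 : 1 ≤ uu := by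
    by_contra hc
    have : uu = 0 := by omega
    rw [this] at hCu
    rw [Cc_zero hM] at hCu
    omega
  have hCuq : Cc M uu = ℓ := by
    have h1 := hmin (uu - 1) (by omega)
    have h2 := Cc_step hM (uu - 1)
    have he : uu - 1 + 1 = uu := by omega
    rw [he] at h2
    omega
  have hu2n : uu < 2 * n := by
    by_contra hc
    push_neg at hc
    have := Oc_big hM hc
    omega
  have hsum := OC_sum hM uu (by omega)
  -- the witness box
  set bx : ℕ × ℕ := (n + 1 - ℓ - Oc M uu, 1) with hbx
  have hbxmem : bx ∈ rimM n M ℓ := by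
    rw [mem_rim hM hl1 hln]
    exact ⟨uu, hCu, hOu, by simp [hbx]; omega, by simp [hbx]; omega⟩
  have hsup1 : (rimM n M ℓ).sup Prod.fst = n + 1 - ℓ - Oc M uu := by
    apply le_antisymm
    · apply Finset.sup_le
      intro u hu
      rw [mem_rim hM hl1 hln] at hu
      obtain ⟨m, hm1, hm2, hm3, hm4⟩ := hu
      have : uu ≤ m := hminle m hm1
      have := Oc_mono (M := M) this
      omega
    · exact Finset.le_sup (f := Prod.fst) hbxmem
  refine ⟨uu, hCuq, by omega, hOu, ?_, hminle⟩
  rw [iLab]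
  apply le_antisymm
  · apply Finset.sup_le
    intro u hu
    rw [Finset.mem_filter] at hu
    obtain ⟨hu1', hu2'⟩ := hu
    rw [hsup1] at hu2'
    rw [mem_rim hM hl1 hln] at hu1'
    obtain ⟨m, hm1, hm2, hm3, hm4⟩ := hu1'
    omega
  · have hmem2 : bx ∈ (rimM n M ℓ).filter (fun u => u.1 = (rimM n M ℓ).sup Prod.fst) := by
      rw [Finset.mem_filter]; exact ⟨hbxmem, by rw [hsup1]⟩
    have hle := Finset.le_sup (f := fun u => n + 1 - u.1 - u.2) hmem2
    have hv : (fun u : ℕ × ℕ => n + 1 - u.1 - u.2) bx = ℓ - 1 + Oc M uu := by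
      simp [hbx]; omega
    rw [show n + 1 - bx.1 - bx.2 = ℓ - 1 + Oc M uu from hv] at hle
    exact hle


lemma jLab_eq (hM : IsMatching n M) {ℓ : ℕ} (hl1 : 1 ≤ ℓ) (hln : ℓ ≤ n) {m0 : ℕ}
    (h0 : ℓ ≤ Cc M m0) (h0' : Oc M m0 + ℓ ≤ n) :
    ∃ vv, Oc M vv + ℓ = n ∧ Oc M vv + Cc M vv = vv ∧ ℓ ≤ Cc M vv ∧
      jLab n M ℓ = n + ℓ - 1 - Cc M vv ∧ (∀ m', Oc M m' + ℓ ≤ n → m' ≤ vv) := by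
  classical
  have hex : ∃ m, n + 1 ≤ Oc M m + ℓ := ⟨2*n, by rw [Oc_big hM (le_refl _)]; omega⟩
  set ww := Nat.find hex with hww
  have hOw : n + 1 ≤ Oc M ww + ℓ := Nat.find_spec hex
  have hmin : ∀ m', m' < ww → Oc M m' + ℓ ≤ n := by
    intro m' h
    have := Nat.find_min hex h
    omega
  have hw1 : 1 ≤ ww := by
    by_contra hc
    have h0'' : ww = 0 := by omega
    rw [h0'', Oc_zero hM] at hOw
    omega
  set vv := ww - 1 with hvv
  have hOv : Oc M vv + ℓ ≤ n := hmin vv (by omega)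
  have hle : ∀ m', Oc M m' + ℓ ≤ n → m' ≤ vv := by
    intro m' h
    by_contra hc
    push_neg at hc
    have : ww ≤ m' := by omega
    have := Oc_mono (M := M) this
    omega
  have hstep := Oc_step hM vv
  have hev : vv + 1 = ww := by omega
  rw [hev] at hstep
  have hOveq : Oc M vv + ℓ = n := by omega
  have hv2n : vv < 2 * n := by
    by_contra hc
    push_neg at hc
    have := Oc_big hM hc
    omega
  have hsum := OC_sum hM vv (by omega)
  have hCv : ℓ ≤ Cc M vv := by
    have h1 := hle m0 h0'
    have := Cc_mono (M := M) h1
    omega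
  have hCvn := Cc_le_n hM vv
  set bv : ℕ × ℕ := (1, Cc M vv + 1 - ℓ) with hbv
  have hbvmem : bv ∈ rimM n M ℓ := by
    rw [mem_rim hM hl1 hln]
    exact ⟨vv, hCv, hOv, by simp [hbv]; omega, by simp [hbv]; omega⟩
  have hsup2 : (rimM n M ℓ).sup Prod.snd = Cc M vv + 1 - ℓ := by
    apply le_antisymm
    · apply Finset.sup_le
      intro u hu
      rw [mem_rim hM hl1 hln] at hu
      obtain ⟨m, hm1, hm2, hm3, hm4⟩ := hu
      have h1 : m ≤ vv := hle m hm2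
      have := Cc_mono (M := M) h1
      omega
    · exact Finset.le_sup (f := Prod.snd) hbvmem
  refine ⟨vv, hOveq, by omega, hCv, ?_, hle⟩
  rw [jLab]
  apply le_antisymm
  · apply Finset.sup_le
    intro u hu
    rw [Finset.mem_filter] at hu
    obtain ⟨hu1', hu2'⟩ := hu
    rw [hsup2] at hu2'
    rw [mem_rim hM hl1 hln] at hu1'
    obtain ⟨m, hm1, hm2, hm3, hm4⟩ := hu1'
    have h1 : m ≤ vv := hle m hm2
    have := Oc_mono (M := M) h1
    omega
  · have hmem2 : bv ∈ (rimM n M ℓ).filter (fun u => u.2 = (rimM n M ℓ).sup Prod.snd) := by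
      rw [Finset.mem_filter]; exact ⟨hbvmem, by rw [hsup2]⟩
    have hle2 := Finset.le_sup (f := fun u => n + 1 - u.1 - u.2) hmem2
    have hv : (fun u : ℕ × ℕ => n + 1 - u.1 - u.2) bv = n + ℓ - 1 - Cc M vv := by
      simp [hbv]; omega
    rw [show n + 1 - bv.1 - bv.2 = n + ℓ - 1 - Cc M vv from hv] at hle2
    exact hle2

lemma kLab_le_iff (hM : IsMatching n M) {ℓ p' : ℕ} (hl1 : 1 ≤ ℓ) (hln : ℓ ≤ n) (hp' : p' ≤ n) :
    kLab n M ℓ ≤ p' ↔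
      ∃ m, ℓ ≤ Cc M m ∧ Oc M m + ℓ ≤ n ∧ Oc M m + 2*ℓ ≤ Cc M m + p' + 1 := by
  rw [kLab]
  have hiff : n + 1 - (rimM n M ℓ).sup (fun u => u.1 + u.2) ≤ p' ↔
      n + 1 - p' ≤ (rimM n M ℓ).sup (fun u => u.1 + u.2) := by omega
  rw [hiff, Finset.le_sup_iff (by omega : (0:ℕ) < n + 1 - p')]
  constructor
  · rintro ⟨u, hu, hval⟩
    rw [mem_rim hM hl1 hln] at hu
    obtain ⟨m, hm1, hm2, hm3, hm4⟩ := hu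
    exact ⟨m, hm1, hm2, by omega⟩
  · rintro ⟨m, hm1, hm2, hm3⟩
    refine ⟨(n + 1 - ℓ - Oc M m, Cc M m + 1 - ℓ), ?_, ?_⟩
    · rw [mem_rim hM hl1 hln]
      exact ⟨m, hm1, hm2, by simp; omega, by simp; omega⟩
    · simp; omega


lemma span_le_Cr (hM : IsMatching n M) {p m : ℕ} (hpn : p + 1 ≤ n)
    (h1 : p ≤ m) (h2 : m ≤ 2*n - p) :
    (M.filter fun q => q.1 ≤ p ∧ 2*n+1-p ≤ q.2).card ≤ Cr M m := by
  apply Finset.card_le_card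
  intro q hq
  rw [Finset.mem_filter] at hq ⊢
  have := bnd hM hq.1
  exact ⟨hq.1, by omega, by omega⟩

lemma cond1_iff (hM : IsMatching n M) {p ℓ : ℕ} (hp1 : 1 ≤ p) (hpn : p + 1 ≤ n)
    (hl1 : 1 ≤ ℓ) (hln : ℓ ≤ n) :
    (kLab n M ℓ ≤ p ∧ p ≤ iLab n M ℓ) ↔
      (Cc M p < ℓ ∧ 2*ℓ + (M.filter fun q => q.1 ≤ p ∧ 2*n+1-p ≤ q.2).card ≤ p + 1) := by
  have hOCp := OC_sum hM p (by omega)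
  have hOC2 := OC_sum hM (2*n-p) (by omega)
  constructor
  · rintro ⟨hk, hi⟩
    obtain ⟨m, hm1, hm2, hm3⟩ := (kLab_le_iff hM hl1 hln (by omega : p ≤ n)).mp hk
    obtain ⟨uu, hCu, hsu, hOu, hiL, humin⟩ := iLab_eq hM hl1 hln hm1 hm2
    have hCpl : Cc M p < ℓ := by
      by_contra hc
      push_neg at hc
      have h1 := humin p hc
      omega
    refine ⟨hCpl, ?_⟩
    rcases Nat.lt_or_ge m p with hmp | hmp
    · have := Cc_mono (M := M) (le_of_lt hmp)
      omega
    · rcases le_or_gt m (2*n-p) with hm2n | hm2n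
      · have hS := span_le_Cr hM hpn hmp hm2n
        have hCr := Cr_add hM m
        have hOCm := OC_sum hM m (by omega)
        omega
      · have h1 : Oc M (2*n-p) ≤ Oc M m := Oc_mono (by omega)
        have hS := span_le_Cr hM hpn (by omega : p ≤ 2*n-p) (le_refl _)
        have hCr := Cr_add hM (2*n-p)
        omega
  · rintro ⟨hCpl, hup⟩
    obtain ⟨ms, hms1, hms2, hms3⟩ := exists_mstar hM hp1 hpn
    have hCleOp := Cc_le_Oc hM p
    obtain ⟨m, hma, hmb, hmeq⟩ := ivt_first hM (a := p) (b := ms) (L := p+1-2*ℓ)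
      hms1 (by omega) (by omega) (by omega)
    have hOCm := OC_sum hM m (by omega)
    have hCm : ℓ ≤ Cc M m := by omega
    have hOm : Oc M m + ℓ ≤ n := by omega
    have hkl := (kLab_le_iff hM hl1 hln (by omega : p ≤ n)).mpr ⟨m, hCm, hOm, by omega⟩
    refine ⟨hkl, ?_⟩
    obtain ⟨uu, hCu, hsu, hOu, hiL, humin⟩ := iLab_eq hM hl1 hln hCm hOm
    have hpu : p < uu := by
      by_contra hc
      push_neg at hc
      have := Cc_mono (M := M) hc
      omega
    omega

lemma cond2_iff (hM : IsMatching n M) {p ℓ : ℕ} (hp1 : 1 ≤ p) (hpn : p + 1 ≤ n)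
    (hl1 : 1 ≤ ℓ) (hln : ℓ ≤ n) :
    (kLab n M ℓ + 1 ≤ p ∧ p ≤ jLab n M ℓ) ↔
      (n < ℓ + Oc M (2*n-p) ∧ 2*ℓ + (M.filter fun q => q.1 ≤ p ∧ 2*n+1-p ≤ q.2).card ≤ p) := by
  have hOCp := OC_sum hM p (by omega)
  have hOC2 := OC_sum hM (2*n-p) (by omega)
  have hCleOp := Cc_le_Oc hM p
  have hSp := span_le_Cr hM hpn (le_refl p) (by omega : p ≤ 2*n-p)
  have hCrp := Cr_add hM p
  constructor
  · rintro ⟨hk, hj⟩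
    have hk' : kLab n M ℓ ≤ p - 1 := by omega
    obtain ⟨m, hm1, hm2, hm3⟩ := (kLab_le_iff hM hl1 hln (by omega : p - 1 ≤ n)).mp hk'
    obtain ⟨vv, hOveq, hsv, hCv, hjL, hvle⟩ := jLab_eq hM hl1 hln hm1 hm2
    have hO : n < ℓ + Oc M (2*n-p) := by
      by_contra hc
      push_neg at hc
      have h1 : 2*n - p ≤ vv := hvle (2*n-p) (by omega)
      have h2 := Cc_mono (M := M) h1
      omega
    refine ⟨hO, ?_⟩
    rcases Nat.lt_or_ge m p with hmp | hmp
    · have := Cc_mono (M := M) (le_of_lt hmp)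
      omega
    · rcases le_or_gt m (2*n-p) with hm2n | hm2n
      · have hS := span_le_Cr hM hpn hmp hm2n
        have hCr := Cr_add hM m
        have hOCm := OC_sum hM m (by omega)
        omega
      · have h1 : Oc M (2*n-p) ≤ Oc M m := Oc_mono (by omega)
        have hS := span_le_Cr hM hpn (by omega : p ≤ 2*n-p) (le_refl _)
        have hCr := Cr_add hM (2*n-p)
        omega
  · rintro ⟨hO, hup⟩
    obtain ⟨ms, hms1, hms2, hms3⟩ := exists_mstar hM hp1 hpn
    have he : ms + (2*n - p - ms) = 2*n - p := by omega
    obtain ⟨m, hma, hmb, hmeq⟩ := ivt_last hM (L := p - 2*ℓ) (2*n - p - ms) ms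
      (by omega) (by omega) (by rw [he]; omega)
    rw [he] at hmb
    have hOCm := OC_sum hM m (by omega)
    have hCm : ℓ ≤ Cc M m := by omega
    have hOm : Oc M m + ℓ ≤ n := by omega
    have hkl := (kLab_le_iff hM hl1 hln (by omega : p - 1 ≤ n)).mpr ⟨m, hCm, hOm, by omega⟩
    refine ⟨by omega, ?_⟩
    obtain ⟨vv, hOveq, hsv, hCv, hjL, hvle⟩ := jLab_eq hM hl1 hln hCm hOm
    have hvval : vv < 2*n - p := by
      by_contra hc
      push_neg at hc
      have := Oc_mono (M := M) hc
      omega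
    omega

end RuleAB


open RuleAB

/-- Rule A and Rule B define the same multiplicities: `m_p^{(A)}(π) = m_p^{(B)}(π)`
for `1 ≤ p ≤ n - 1`. -/
theorem ruleA_eq_ruleB (n : ℕ) (M : Finset (ℕ × ℕ)) (hM : IsMatching n M) :
    ∀ p, 1 ≤ p → p ≤ n - 1 → mA n M p = mB n M p := by
  intro p hp1 hp2
  have hpn : p + 1 ≤ n := by omega
  set S := (M.filter fun q => q.1 ≤ p ∧ 2*n+1-p ≤ q.2).card with hSdef
  have hOCp := OC_sum hM p (by omega)
  have hOC2 := OC_sum hM (2*n-p) (by omega)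
  have hCrp := Cr_add hM p
  have hCr2 := Cr_add hM (2*n-p)
  have hSp := span_le_Cr hM hpn (le_refl p) (by omega : p ≤ 2*n-p)
  have hS2 := span_le_Cr hM hpn (by omega : p ≤ 2*n-p) (le_refl (2*n-p))
  have hOn2 := Oc_le_n hM (2*n-p)
  -- mA numerator pieces
  have hA : (M.filter fun q => q.1 ≤ p ∧ p < q.2 ∧ q.2 < 2 * n + 1 - p).card + S = Cr M p := by
    rw [hSdef, Cr]
    rw [← Finset.card_union_of_disjoint (by
      simp only [Finset.disjoint_filter]
      intro q _ hq hq'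
      omega)]
    congr 1
    rw [← Finset.filter_or]
    apply Finset.filter_congr
    intro q hq
    have := bnd hM hq
    omega
  have hB : (M.filter fun q => p < q.1 ∧ q.1 < 2 * n + 1 - p ∧ 2 * n + 1 - p ≤ q.2).card + S
      = Cr M (2*n-p) := by
    rw [hSdef, Cr]
    rw [← Finset.card_union_of_disjoint (by
      simp only [Finset.disjoint_filter]
      intro q _ hq hq'
      omega)]
    congr 1
    rw [← Finset.filter_or]
    apply Finset.filter_congr
    intro q hq
    have := bnd hM hq
    omega
  -- mB
  have hmB : mB n M p =
      ((Finset.Icc 1 n).filter fun ℓ => kLab n M ℓ ≤ p ∧ p ≤ iLab n M ℓ).card +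
      ((Finset.Icc 1 n).filter fun ℓ => kLab n M ℓ + 1 ≤ p ∧ p ≤ jLab n M ℓ).card := by
    rw [mB, Finset.sum_add_distrib]
    simp [Finset.sum_boole]
  have hf1 : ((Finset.Icc 1 n).filter fun ℓ => kLab n M ℓ ≤ p ∧ p ≤ iLab n M ℓ)
      = Finset.Icc (Cc M p + 1) ((p + 1 - S) / 2) := by
    ext ℓ
    rw [Finset.mem_filter, Finset.mem_Icc, Finset.mem_Icc]
    constructor
    · rintro ⟨⟨h1, h2⟩, hc⟩
      have := (cond1_iff hM hp1 hpn h1 h2).mp hc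
      omega
    · rintro ⟨h1, h2⟩
      have hl1 : 1 ≤ ℓ := by omega
      have hln : ℓ ≤ n := by omega
      refine ⟨⟨hl1, hln⟩, (cond1_iff hM hp1 hpn hl1 hln).mpr ⟨by omega, by omega⟩⟩
  have hf2 : ((Finset.Icc 1 n).filter fun ℓ => kLab n M ℓ + 1 ≤ p ∧ p ≤ jLab n M ℓ)
      = Finset.Icc (n - Oc M (2*n-p) + 1) ((p - S) / 2) := by
    ext ℓ
    rw [Finset.mem_filter, Finset.mem_Icc, Finset.mem_Icc]
    constructor
    · rintro ⟨⟨h1, h2⟩, hc⟩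
      have := (cond2_iff hM hp1 hpn h1 h2).mp hc
      omega
    · rintro ⟨h1, h2⟩
      have hl1 : 1 ≤ ℓ := by omega
      have hln : ℓ ≤ n := by omega
      refine ⟨⟨hl1, hln⟩, (cond2_iff hM hp1 hpn hl1 hln).mpr ⟨by omega, by omega⟩⟩
  rw [mA, hmB, hf1, hf2, Nat.card_Icc, Nat.card_Icc]
  omega
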